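/- Let A be an anti-commutative algebra over a field F. Then A is a CB-algebra if and only if every element of A is an absolute zero divisor, i.e., (y·x)·x = 0 for all x, y ∈ A. -/
import Mathlib


/-- An anti-commutative algebra is a CB-algebra iff every element is an
absolute zero divisor. -/
theorem stmt_1 (F : Type*) [Field F] (A : Type*) [AddCommGroup A] [Module F A]
    (mul : A →ₗ[F] A →ₗ[F] A)
    (hac : ∀ x : A, mul x x = 0) :
    (∀ x y : A, mul x y = 0 → ∀ z : A, mul (mul x z) y = 0) ↔
      (∀ x y : A, mul (mul y x) x = 0) := by
  have anti : ∀ x y : A, mul x y = - mul y x := by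
    intro x y
    have h := hac (x + y)
    simp only [map_add, LinearMap.add_apply, hac x, hac y, zero_add, add_zero] at h
    linear_combination (norm := abel) h
  constructor
  · intro hCB x y
    have h0 : mul (mul x y) x = 0 := hCB x x (hac x) y
    rw [anti y x, map_neg, LinearMap.neg_apply, h0, neg_zero]
  · intro h x y hxy z
    have lin : mul (mul x z) y + mul (mul x y) z = 0 := by
      have h1 := h (z + y) x
      simp only [map_add, LinearMap.add_apply, h z x, h y x, zero_add, add_zero] at h1
      linear_combination (norm := abel) h1
    rw [hxy, map_zero, LinearMap.zero_apply, add_zero] at lin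
    exact lin
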